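/- Polynomial equivalid formula for propositional logic: a contextual propositional formula φ is valid if and only if the ordinary propositional formula φ_e := (⋀_{c[ψ₁],c[ψ₂]∈cs(φ)} (dec(ψ₁) → dec(ψ₂)) → (p_{c[ψ₁]} → p_{c[ψ₂]})) → dec(φ) is a tautology, where the conjunction ranges over all pairs of context subformulas of φ with the same context variable c. -/

import Mathlib

inductive PForm (α : Type) : Type
  | tru : PForm α
  | fls : PForm α
  | atom : α → PForm α
  | natom : α → PForm α
  | and : PForm α → PForm α → PForm α
  | or : PForm α → PForm α → PForm α

variable {α : Type}

def PForm.eval (v : α → Bool) : PForm α → Bool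
  | .tru => true
  | .fls => false
  | .atom a => v a
  | .natom a => !(v a)
  | .and φ ψ => φ.eval v && ψ.eval v
  | .or φ ψ => φ.eval v || ψ.eval v

inductive Ctx (α : Type) : Type
  | tru : Ctx α
  | fls : Ctx α
  | hole : Ctx α
  | atom : α → Ctx α
  | natom : α → Ctx α
  | and : Ctx α → Ctx α → Ctx α
  | or : Ctx α → Ctx α → Ctx α

/-- Fill every hole of a context with a formula. -/
def Ctx.fill : Ctx α → PForm α → PForm α
  | .tru, _ => .tru
  | .fls, _ => .fls
  | .hole, ψ => ψ
  | .atom a, _ => .atom a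
  | .natom a, _ => .natom a
  | .and C D, ψ => .and (C.fill ψ) (D.fill ψ)
  | .or C D, ψ => .or (C.fill ψ) (D.fill ψ)

/-- Negation (De Morgan dual) of an NNF formula. -/
def PForm.negNNF : PForm α → PForm α
  | .tru => .fls
  | .fls => .tru
  | .atom a => .natom a
  | .natom a => .atom a
  | .and φ ψ => .or φ.negNNF ψ.negNNF
  | .or φ ψ => .and φ.negNNF ψ.negNNF

/-- View an ordinary formula as a (hole-free) context. -/
def PForm.toCtx : PForm α → Ctx α
  | .tru => .tru
  | .fls => .fls
  | .atom a => .atom a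
  | .natom a => .natom a
  | .and φ ψ => .and φ.toCtx ψ.toCtx
  | .or φ ψ => .or φ.toCtx ψ.toCtx

def bigAndC : List (Ctx α) → Ctx α := List.foldr Ctx.and Ctx.tru

/-- Contextual propositional formulas over context variables `γ` and atoms `α`. -/
inductive CForm (γ α : Type) : Type
  | tru : CForm γ α
  | fls : CForm γ α
  | atom : α → CForm γ α
  | natom : α → CForm γ α
  | and : CForm γ α → CForm γ α → CForm γ α
  | or : CForm γ α → CForm γ α → CForm γ α
  | capp : γ → CForm γ α → CForm γ α

variable {γ : Type}

/-- Instantiate the context variables (bottom-up). -/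
def CForm.inst (σ : γ → Ctx α) : CForm γ α → PForm α
  | .tru => .tru
  | .fls => .fls
  | .atom a => .atom a
  | .natom a => .natom a
  | .and φ ψ => .and (φ.inst σ) (ψ.inst σ)
  | .or φ ψ => .or (φ.inst σ) (ψ.inst σ)
  | .capp c φ => (σ c).fill (φ.inst σ)

/-- The context subformulas `c[ψ]` of a contextual formula, as pairs `(c, ψ)`. -/
def CForm.csubs : CForm γ α → List (γ × CForm γ α)
  | .and φ ψ => φ.csubs ++ ψ.csubs
  | .or φ ψ => φ.csubs ++ ψ.csubs
  | .capp c φ => (c, φ) :: φ.csubs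
  | _ => []

/-- Decontextualization: replace maximal context subformulas by fresh atoms. -/
def CForm.dec : CForm γ α → PForm (α ⊕ γ × CForm γ α)
  | .tru => .tru
  | .fls => .fls
  | .atom a => .atom (Sum.inl a)
  | .natom a => .natom (Sum.inl a)
  | .and φ ψ => .and φ.dec ψ.dec
  | .or φ ψ => .or φ.dec ψ.dec
  | .capp c φ => .atom (Sum.inr (c, φ))

def CForm.mapAtoms (f : α → δ) : CForm γ α → CForm γ δ
  | .tru => .tru
  | .fls => .fls
  | .atom a => .atom (f a)
  | .natom a => .natom (f a)
  | .and φ ψ => .and (φ.mapAtoms f) (ψ.mapAtoms f)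
  | .or φ ψ => .or (φ.mapAtoms f) (ψ.mapAtoms f)
  | .capp c φ => .capp c (φ.mapAtoms f)

/-- Implication of NNF formulas: `a → b := ¬a ∨ b`. -/
def impF (a b : PForm α) : PForm α := .or a.negNNF b

def bigAnd : List (PForm α) → PForm α := List.foldr PForm.and PForm.tru

/-- The equivalid formula `φ_e`. -/
def phiE [DecidableEq γ] (φ : CForm γ α) : PForm (α ⊕ γ × CForm γ α) :=
  impF
    (bigAnd ((φ.csubs).flatMap fun x =>
      ((φ.csubs).filter (fun y => decide (y.1 = x.1))).map fun y =>
        impF (impF x.2.dec y.2.dec) (impF (.atom (Sum.inr x)) (.atom (Sum.inr y)))))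
    φ.dec

/- ===== auxiliary lemmas ===== -/

theorem negNNF_eval (v : α → Bool) (φ : PForm α) : φ.negNNF.eval v = !(φ.eval v) := by
  induction φ <;> simp [PForm.negNNF, PForm.eval, *]

theorem impF_eval (v : α → Bool) (a b : PForm α) :
    (impF a b).eval v = (!(a.eval v) || b.eval v) := by
  simp [impF, PForm.eval, negNNF_eval]

theorem fill_toCtx (φ ψ : PForm α) : φ.toCtx.fill ψ = φ := by
  induction φ <;> simp [PForm.toCtx, Ctx.fill, *]

theorem fill_mono (v : α → Bool) (C : Ctx α) (X Y : PForm α)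
    (h : X.eval v = true → Y.eval v = true) :
    (C.fill X).eval v = true → (C.fill Y).eval v = true := by
  induction C <;> simp_all [Ctx.fill, PForm.eval] <;> tauto

theorem bigAnd_eval (v : α → Bool) (l : List (PForm α)) :
    (bigAnd l).eval v = true ↔ ∀ x ∈ l, x.eval v = true := by
  induction l with
  | nil => simp [bigAnd, PForm.eval]
  | cons a l ih => simp only [bigAnd, List.foldr_cons, PForm.eval, Bool.and_eq_true] at ih ⊢
                   simp [ih]

def bigOr : List (PForm α) → PForm α := List.foldr PForm.or PForm.fls

theorem bigOr_eval (v : α → Bool) (l : List (PForm α)) :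
    (bigOr l).eval v = true ↔ ∃ x ∈ l, x.eval v = true := by
  induction l with
  | nil => simp [bigOr, PForm.eval]
  | cons a l ih => simp only [bigOr, List.foldr_cons, PForm.eval, Bool.or_eq_true] at ih ⊢
                   simp [ih]

/-- Polynomial equivalid formula: `φ` is contextually valid iff `φ_e` is a tautology. -/
theorem equivalid_formula_valid {γ α : Type} [DecidableEq γ] (φ : CForm γ α) :
    (∀ (σ : γ → Ctx (α ⊕ γ × CForm γ α)) (v : α ⊕ γ × CForm γ α → Bool),
        ((φ.mapAtoms Sum.inl).inst σ).eval v = true) ↔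
    (∀ v : α ⊕ γ × CForm γ α → Bool, (phiE φ).eval v = true) := by
  constructor
  · -- validity implies φ_e is a tautology
    intro hval v
    rw [phiE, impF_eval]
    cases h : (bigAnd ((φ.csubs).flatMap fun x =>
      ((φ.csubs).filter (fun y => decide (y.1 = x.1))).map fun y =>
        impF (impF x.2.dec y.2.dec)
          (impF (.atom (Sum.inr x)) (.atom (Sum.inr y))))).eval v with
    | false => simp
    | true =>
      simp only [h, Bool.not_true, Bool.false_or]
      -- extract the premise
      have prem : ∀ x ∈ φ.csubs, ∀ y ∈ φ.csubs, y.1 = x.1 →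
          (x.2.dec.eval v = true → y.2.dec.eval v = true) →
          v (Sum.inr x) = true → v (Sum.inr y) = true := by
        intro x hx y hy hxy
        have h' := (bigAnd_eval v _).1 h
        have h'' := h' _ (List.mem_flatMap.2 ⟨x, hx,
          List.mem_map.2 ⟨y, List.mem_filter.2 ⟨hy, by simpa using hxy⟩, rfl⟩⟩)
        simp only [impF_eval, PForm.eval, Bool.or_eq_true, Bool.not_eq_true',
          Bool.not_eq_true] at h''
        rcases h'' with h'' | h'' | h''
        · intro hab
          exfalso
          revert h''
          rcases h1 : x.2.dec.eval v with _ | _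
          · simp [impF, PForm.eval, negNNF_eval, h1]
          · simp [impF, PForm.eval, negNNF_eval, h1, hab h1]
        · intro _ hp; rw [hp] at h''; cases h''
        · intro _ _; exact h''
      -- the little formulas describing the instantiation
      set L : γ → List (γ × CForm γ α) :=
        fun c => φ.csubs.filter (fun y => decide (y.1 = c)) with hL
      set A1 : γ → PForm (α ⊕ γ × CForm γ α) :=
        fun c => bigOr ((L c).map fun y => .and y.2.dec (.atom (Sum.inr y))) with hA1def
      set B0 : γ → PForm (α ⊕ γ × CForm γ α) :=
        fun c => bigOr ((L c).map fun y => .and y.2.dec.negNNF (.atom (Sum.inr y))) with hB0def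
      set σ : γ → Ctx (α ⊕ γ × CForm γ α) :=
        fun c => Ctx.or (B0 c).toCtx (Ctx.and Ctx.hole (A1 c).toCtx) with hσdef
      have hA1 : ∀ c, ((A1 c).eval v = true ↔
          ∃ y ∈ L c, y.2.dec.eval v = true ∧ v (Sum.inr y) = true) := by
        intro c
        rw [hA1def, bigOr_eval]
        constructor
        · rintro ⟨Z, hZ, hZe⟩
          rcases List.mem_map.1 hZ with ⟨y, hy, rfl⟩
          simp only [PForm.eval, Bool.and_eq_true] at hZe
          exact ⟨y, hy, hZe⟩
        · rintro ⟨y, hy, h1, h2⟩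
          exact ⟨_, List.mem_map.2 ⟨y, hy, rfl⟩, by simp [PForm.eval, h1, h2]⟩
      have hB0 : ∀ c, ((B0 c).eval v = true ↔
          ∃ y ∈ L c, y.2.dec.eval v = false ∧ v (Sum.inr y) = true) := by
        intro c
        rw [hB0def, bigOr_eval]
        constructor
        · rintro ⟨Z, hZ, hZe⟩
          rcases List.mem_map.1 hZ with ⟨y, hy, rfl⟩
          simp only [PForm.eval, negNNF_eval, Bool.and_eq_true, Bool.not_eq_true'] at hZe
          exact ⟨y, hy, hZe⟩
        · rintro ⟨y, hy, h1, h2⟩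
          exact ⟨_, List.mem_map.2 ⟨y, hy, rfl⟩,
            by simp [PForm.eval, negNNF_eval, h1, h2]⟩
      have memL : ∀ y c, y ∈ L c ↔ (y ∈ φ.csubs ∧ y.1 = c) := by
        intro y c
        rw [hL, List.mem_filter]
        simp
      -- key property of σ
      have key : ∀ x ∈ φ.csubs, ∀ X : PForm (α ⊕ γ × CForm γ α),
          X.eval v = x.2.dec.eval v →
          ((σ x.1).fill X).eval v = v (Sum.inr x) := by
        intro x hx X hX
        have hxL : x ∈ L x.1 := (memL x x.1).2 ⟨hx, rfl⟩
        have step : ∀ y ∈ L x.1, v (Sum.inr y) = true →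
            (y.2.dec.eval v = true → x.2.dec.eval v = true) →
            v (Sum.inr x) = true := by
          intro y hy hpy himp
          rcases (memL y x.1).1 hy with ⟨hy', hyc⟩
          exact prem y hy' x hx hyc.symm himp hpy
        rw [hσdef]
        simp only [Ctx.fill, fill_toCtx, PForm.eval]
        rw [hX]
        cases hd : x.2.dec.eval v with
        | true =>
          cases hp : v (Sum.inr x) with
          | true =>
            have hA : (A1 x.1).eval v = true :=
              (hA1 x.1).2 ⟨x, hxL, hd, hp⟩
            simp [hA]
          | false =>
            have hA : (A1 x.1).eval v = false := by
              rcases hA' : (A1 x.1).eval v with _ | _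
              · rfl
              · rcases (hA1 x.1).1 hA' with ⟨y, hy, _, hpy⟩
                have := step y hy hpy (fun _ => hd)
                rw [this] at hp; cases hp
            have hB : (B0 x.1).eval v = false := by
              rcases hB' : (B0 x.1).eval v with _ | _
              · rfl
              · rcases (hB0 x.1).1 hB' with ⟨y, hy, _, hpy⟩
                have := step y hy hpy (fun _ => hd)
                rw [this] at hp; cases hp
            simp [hA, hB]
        | false =>
          cases hp : v (Sum.inr x) with
          | true =>
            have hB : (B0 x.1).eval v = true :=
              (hB0 x.1).2 ⟨x, hxL, hd, hp⟩
            simp [hB]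
          | false =>
            have hB : (B0 x.1).eval v = false := by
              rcases hB' : (B0 x.1).eval v with _ | _
              · rfl
              · rcases (hB0 x.1).1 hB' with ⟨y, hy, hyd, hpy⟩
                have := step y hy hpy (fun hc => by rw [hc] at hyd; cases hyd)
                rw [this] at hp; cases hp
            simp [hB]
      -- the instantiation agrees with decontextualization
      have inst_eq : ∀ χ : CForm γ α, (∀ x ∈ χ.csubs, x ∈ φ.csubs) →
          ((χ.mapAtoms Sum.inl).inst σ).eval v = χ.dec.eval v := by
        intro χ
        induction χ with
        | tru => intro _; rfl
        | fls => intro _; rfl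
        | atom a => intro _; rfl
        | natom a => intro _; rfl
        | and a b iha ihb =>
          intro hsub
          have ha := iha (fun x hx => hsub x (by simp [CForm.csubs, hx]))
          have hb := ihb (fun x hx => hsub x (by simp [CForm.csubs, hx]))
          simp [CForm.mapAtoms, CForm.inst, CForm.dec, PForm.eval, ha, hb]
        | or a b iha ihb =>
          intro hsub
          have ha := iha (fun x hx => hsub x (by simp [CForm.csubs, hx]))
          have hb := ihb (fun x hx => hsub x (by simp [CForm.csubs, hx]))
          simp [CForm.mapAtoms, CForm.inst, CForm.dec, PForm.eval, ha, hb]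
        | capp c ψ ih =>
          intro hsub
          have hmem : (c, ψ) ∈ φ.csubs := hsub _ (by simp [CForm.csubs])
          have hψ := ih (fun x hx => hsub x (by simp [CForm.csubs, hx]))
          show ((σ c).fill ((ψ.mapAtoms Sum.inl).inst σ)).eval v = v (Sum.inr (c, ψ))
          exact key (c, ψ) hmem _ hψ
      have := hval σ v
      rw [inst_eq φ (fun _ h => h)] at this
      exact this
  · -- φ_e tautology implies validity
    intro htaut σ v
    set w : α ⊕ γ × CForm γ α → Bool :=
      Sum.elim (fun a => v (Sum.inl a))
        (fun x => ((σ x.1).fill ((x.2.mapAtoms Sum.inl).inst σ)).eval v) with hw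
    have dec_eq : ∀ χ : CForm γ α,
        χ.dec.eval w = ((χ.mapAtoms Sum.inl).inst σ).eval v := by
      intro χ
      induction χ <;>
        simp_all [CForm.dec, CForm.mapAtoms, CForm.inst, PForm.eval]
    have hφe := htaut w
    rw [phiE, impF_eval] at hφe
    have hprem : (bigAnd ((φ.csubs).flatMap fun x =>
      ((φ.csubs).filter (fun y => decide (y.1 = x.1))).map fun y =>
        impF (impF x.2.dec y.2.dec)
          (impF (.atom (Sum.inr x)) (.atom (Sum.inr y))))).eval w = true := by
      rw [bigAnd_eval]
      intro Z hZ
      rcases List.mem_flatMap.1 hZ with ⟨x, _, hZ2⟩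
      rcases List.mem_map.1 hZ2 with ⟨y, hy, rfl⟩
      have hy1 : y.1 = x.1 := by simpa using (List.mem_filter.1 hy).2
      have mono : (x.2.dec.eval w = true → y.2.dec.eval w = true) →
          (w (Sum.inr x) = true → w (Sum.inr y) = true) := by
        intro hab hp
        rw [hw] at hp ⊢
        simp only [Sum.elim_inr] at hp ⊢
        rw [hy1]
        refine fill_mono v (σ x.1) _ _ ?_ hp
        rw [← dec_eq, ← dec_eq]
        exact hab
      simp only [impF_eval, PForm.eval, Bool.or_eq_true, Bool.not_eq_true',
        Bool.not_eq_true]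
      rcases ha : x.2.dec.eval w with _ | _
      · rcases hp : w (Sum.inr x) with _ | _
        · right; left; rfl
        · right; right
          exact mono (fun h => by rw [h] at ha; cases ha) hp
      · rcases hb : y.2.dec.eval w with _ | _
        · left; simp [ha, hb, negNNF_eval]
        · rcases hp : w (Sum.inr x) with _ | _
          · right; left; rfl
          · right; right
            exact mono (fun _ => hb) hp
    rw [hprem] at hφe
    simp only [Bool.not_true, Bool.false_or] at hφe
    rw [dec_eq φ] at hφe
    exact hφe
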